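/- Let (Ω, 𝓕, P) be a probability space with filtration (𝓕_k). Let (θ_k) be an adapted sequence of nonnegative integrable real random variables and (α_k) nonnegative deterministic step sizes with ∑_k α_k = ∞ and ∑_k α_k² < ∞. Suppose there are constants K₄, K₅ ≥ 0 such that E[θ_{k+1} − θ_k | 𝓕_k] ≤ α_k θ_k K₄ + α_k² K₅ almost surely for every k, and suppose additionally that ∑_k α_k E[θ_k] < ∞ and that ∑_k α_k θ_k < ∞ almost surely. Then θ_k → 0 almost surely. -/

import Mathlib

open MeasureTheory Filter

/-- Second quasi-martingale step of the SGD convergence proof: a nonnegative adapted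
integrable process `θ_k` with `E[θ_{k+1} − θ_k | 𝓕_k] ≤ α_k θ_k K₄ + α_k² K₅`, where
`∑ α_k = ∞`, `∑ α_k² < ∞`, `∑ α_k E[θ_k] < ∞` and `∑ α_k θ_k < ∞` almost surely,
converges to `0` almost surely. -/
theorem stmt_11 {Ω : Type} {m0 : MeasurableSpace Ω} {P : Measure Ω}
    [IsProbabilityMeasure P] (𝓕 : Filtration ℕ m0)
    (θ : ℕ → Ω → ℝ) (hθad : Adapted 𝓕 θ)
    (hθnn : ∀ k ω, 0 ≤ θ k ω) (hθint : ∀ k, Integrable (θ k) P)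
    (α : ℕ → ℝ) (hα : ∀ k, 0 ≤ α k)
    (hα1 : Tendsto (fun N => ∑ k ∈ Finset.range N, α k) atTop atTop)
    (hα2 : Summable fun k => α k ^ 2)
    (K₄ K₅ : ℝ) (hK₄ : 0 ≤ K₄) (hK₅ : 0 ≤ K₅)
    (hcond : ∀ k, P[fun ω => θ (k + 1) ω - θ k ω | 𝓕 k] ≤ᵐ[P]
      fun ω => α k * θ k ω * K₄ + α k ^ 2 * K₅)
    (hsumexp : Summable fun k => α k * ∫ ω, θ k ω ∂P)
    (hsumas : ∀ᵐ ω ∂P, Summable fun k => α k * θ k ω) :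
    ∀ᵐ ω ∂P, Tendsto (fun k => θ k ω) atTop (nhds 0) := by
  classical
  -- the increment bounding the conditional drift
  set incr : ℕ → Ω → ℝ := fun k ω => α k * θ k ω * K₄ + α k ^ 2 * K₅ with hincr_def
  have hincr_nn : ∀ k ω, 0 ≤ incr k ω := fun k ω => by
    have := mul_nonneg (mul_nonneg (hα k) (hθnn k ω)) hK₄
    have := mul_nonneg (sq_nonneg (α k)) hK₅
    simp only [hincr_def]; positivity
  have hincr_int : ∀ k, Integrable (incr k) P := fun k => by
    exact
      (((hθint k).const_mul (α k)).mul_const K₄).add (integrable_const (α k ^ 2 * K₅))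
  -- the compensator
  set A : ℕ → Ω → ℝ := fun k ω => ∑ j ∈ Finset.range k, incr j ω with hA_def
  have hA_nn : ∀ k ω, 0 ≤ A k ω := fun k ω =>
    Finset.sum_nonneg fun j _ => hincr_nn j ω
  have hA_int : ∀ k, Integrable (A k) P := fun k => by
    simpa [hA_def] using integrable_finset_sum (Finset.range k) fun j _ => hincr_int j
  have hincr_meas : ∀ j k, j ≤ k → StronglyMeasurable[𝓕 k] (incr j) := by
    intro j k hjk
    exact ((((hθad j).stronglyMeasurable.mono (𝓕.mono hjk)).const_mul (α j)).mul_const K₄).add_const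
      (α j ^ 2 * K₅)
  have hAmeas : ∀ n k, n ≤ k + 1 → StronglyMeasurable[𝓕 k] (A n) := by
    intro n k hnk
    apply Finset.stronglyMeasurable_fun_sum
    intro j hj
    exact hincr_meas j k (Nat.lt_succ_iff.mp (lt_of_lt_of_le (Finset.mem_range.mp hj) hnk))
  -- the supermartingale part
  set Z : ℕ → Ω → ℝ := fun k ω => θ k ω - A k ω with hZ_def
  have hZad : Adapted 𝓕 Z := fun k => (hθad k).sub (hAmeas k k k.le_succ).measurable
  have hZint : ∀ k, Integrable (Z k) P := fun k => (hθint k).sub (hA_int k)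
  have hZsup : Supermartingale Z 𝓕 P := by
    refine supermartingale_nat hZad.stronglyAdapted hZint fun k => ?_
    have hAcond : P[A (k + 1) | 𝓕 k] = A (k + 1) :=
      condExp_of_stronglyMeasurable (𝓕.le k) (hAmeas (k + 1) k le_rfl) (hA_int (k + 1))
    have hθcond : P[θ k | 𝓕 k] = θ k :=
      condExp_of_stronglyMeasurable (𝓕.le k) (hθad k).stronglyMeasurable (hθint k)
    have hZeq : Z (k + 1) = θ (k + 1) - A (k + 1) := rfl
    have h1 : P[Z (k + 1) | 𝓕 k] =ᵐ[P] P[θ (k + 1) | 𝓕 k] - A (k + 1) := by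
      rw [hZeq]
      have := condExp_sub (m := 𝓕 k) (μ := P) (hθint (k + 1)) (hA_int (k + 1))
      rwa [hAcond] at this
    have hθsubeq : (fun ω => θ (k + 1) ω - θ k ω) = θ (k + 1) - θ k := rfl
    have h2 : P[fun ω => θ (k + 1) ω - θ k ω | 𝓕 k] =ᵐ[P] P[θ (k + 1) | 𝓕 k] - θ k := by
      rw [hθsubeq]
      have := condExp_sub (m := 𝓕 k) (μ := P) (hθint (k + 1)) (hθint k)
      rwa [hθcond] at this
    filter_upwards [h1, h2, hcond k] with ω e1 e2 e3
    have hAA : A (k + 1) ω = A k ω + incr k ω := by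
      simp [hA_def, Finset.sum_range_succ]
    simp only [Pi.sub_apply] at e1 e2
    have e3' : (P[fun ω => θ (k + 1) ω - θ k ω | 𝓕 k]) ω ≤ incr k ω := e3
    simp only [hZ_def]
    linarith
  -- uniform L¹ bound
  have hθint_nn : ∀ k, 0 ≤ ∫ ω, θ k ω ∂P := fun k =>
    integral_nonneg fun ω => hθnn k ω
  set S₁ : ℝ := ∑' k, α k * ∫ ω, θ k ω ∂P with hS₁
  set S₂ : ℝ := ∑' k, α k ^ 2 with hS₂
  have hS₁nn : 0 ≤ S₁ := tsum_nonneg fun k => mul_nonneg (hα k) (hθint_nn k)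
  have hS₂nn : 0 ≤ S₂ := tsum_nonneg fun k => sq_nonneg _
  have hincr_integral : ∀ j, ∫ ω, incr j ω ∂P = α j * (∫ ω, θ j ω ∂P) * K₄ + α j ^ 2 * K₅ := by
    intro j
    rw [hincr_def]
    rw [integral_add ((((hθint j).const_mul (α j)).mul_const K₄)) (integrable_const _)]
    simp [integral_mul_const, integral_const_mul, measure_univ]
  have hcsum : ∀ k, ∑ j ∈ Finset.range k, (α j * (∫ ω, θ j ω ∂P) * K₄ + α j ^ 2 * K₅)
      ≤ K₄ * S₁ + K₅ * S₂ := by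
    intro k
    have h1 : ∑ j ∈ Finset.range k, α j * (∫ ω, θ j ω ∂P) * K₄
        ≤ K₄ * S₁ := by
      have : ∑ j ∈ Finset.range k, α j * (∫ ω, θ j ω ∂P) ≤ S₁ :=
        Summable.sum_le_tsum _ (fun j _ => mul_nonneg (hα j) (hθint_nn j)) hsumexp
      calc ∑ j ∈ Finset.range k, α j * (∫ ω, θ j ω ∂P) * K₄
          = (∑ j ∈ Finset.range k, α j * (∫ ω, θ j ω ∂P)) * K₄ := by
            rw [Finset.sum_mul]
        _ ≤ S₁ * K₄ := mul_le_mul_of_nonneg_right this hK₄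
        _ = K₄ * S₁ := mul_comm _ _
    have h2 : ∑ j ∈ Finset.range k, α j ^ 2 * K₅ ≤ K₅ * S₂ := by
      have : ∑ j ∈ Finset.range k, α j ^ 2 ≤ S₂ :=
        Summable.sum_le_tsum _ (fun j _ => sq_nonneg _) hα2
      calc ∑ j ∈ Finset.range k, α j ^ 2 * K₅
          = (∑ j ∈ Finset.range k, α j ^ 2) * K₅ := by rw [Finset.sum_mul]
        _ ≤ S₂ * K₅ := mul_le_mul_of_nonneg_right this hK₅
        _ = K₅ * S₂ := mul_comm _ _
    calc ∑ j ∈ Finset.range k, (α j * (∫ ω, θ j ω ∂P) * K₄ + α j ^ 2 * K₅)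
        = (∑ j ∈ Finset.range k, α j * (∫ ω, θ j ω ∂P) * K₄)
          + ∑ j ∈ Finset.range k, α j ^ 2 * K₅ := Finset.sum_add_distrib
      _ ≤ K₄ * S₁ + K₅ * S₂ := add_le_add h1 h2
  -- bound on E[θ k]
  have hb_step : ∀ k, ∫ ω, θ (k + 1) ω ∂P
      ≤ ∫ ω, θ k ω ∂P + (α k * (∫ ω, θ k ω ∂P) * K₄ + α k ^ 2 * K₅) := by
    intro k
    have hint_sub : Integrable (fun ω => θ (k + 1) ω - θ k ω) P :=
      (hθint (k + 1)).sub (hθint k)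
    have h1 : ∫ ω, (P[fun ω => θ (k + 1) ω - θ k ω | 𝓕 k]) ω ∂P
        = ∫ ω, (θ (k + 1) ω - θ k ω) ∂P := integral_condExp (𝓕.le k)
    have h2 : ∫ ω, (P[fun ω => θ (k + 1) ω - θ k ω | 𝓕 k]) ω ∂P
        ≤ ∫ ω, incr k ω ∂P :=
      integral_mono_ae integrable_condExp (hincr_int k) (hcond k)
    rw [h1, integral_sub (hθint (k + 1)) (hθint k)] at h2
    rw [hincr_integral k] at h2
    linarith
  have hb_bound : ∀ k, ∫ ω, θ k ω ∂P ≤ ∫ ω, θ 0 ω ∂P + (K₄ * S₁ + K₅ * S₂) := by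
    have key : ∀ k, ∫ ω, θ k ω ∂P ≤ ∫ ω, θ 0 ω ∂P
        + ∑ j ∈ Finset.range k, (α j * (∫ ω, θ j ω ∂P) * K₄ + α j ^ 2 * K₅) := by
      intro k
      induction k with
      | zero => simp
      | succ n ih =>
        have := hb_step n
        rw [Finset.sum_range_succ]
        linarith
    intro k
    exact (key k).trans (by linarith [hcsum k])
  set C : ℝ := ∫ ω, θ 0 ω ∂P + (K₄ * S₁ + K₅ * S₂) + (K₄ * S₁ + K₅ * S₂) with hC
  have hZL1 : ∀ k, ∫ ω, |Z k ω| ∂P ≤ C := by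
    intro k
    have habs : ∀ ω, |Z k ω| ≤ θ k ω + A k ω := by
      intro ω
      rw [hZ_def]
      rw [abs_sub_le_iff]
      constructor <;> [linarith [hA_nn k ω, hθnn k ω]; linarith [hA_nn k ω, hθnn k ω]]
    have h1 : ∫ ω, |Z k ω| ∂P ≤ ∫ ω, (θ k ω + A k ω) ∂P :=
      integral_mono (hZint k).abs ((hθint k).add (hA_int k)) habs
    have h2 : ∫ ω, (θ k ω + A k ω) ∂P = (∫ ω, θ k ω ∂P) + ∫ ω, A k ω ∂P :=
      integral_add (hθint k) (hA_int k)
    have h3 : ∫ ω, A k ω ∂P = ∑ j ∈ Finset.range k,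
        (α j * (∫ ω, θ j ω ∂P) * K₄ + α j ^ 2 * K₅) := by
      rw [hA_def]
      rw [integral_finset_sum (Finset.range k) fun j _ => hincr_int j]
      exact Finset.sum_congr rfl fun j _ => hincr_integral j
    rw [h2, h3] at h1
    have := hcsum k
    have := hb_bound k
    rw [hC]; linarith
  -- a.e. convergence of Z
  have hZconv : ∀ᵐ ω ∂P, ∃ c, Tendsto (fun k => Z k ω) atTop (nhds c) := by
    have hsub : Submartingale (-Z) 𝓕 P := hZsup.neg
    have hbdd : ∀ n, eLpNorm ((-Z) n) 1 P ≤ C.toNNReal := by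
      intro n
      rw [Pi.neg_apply, eLpNorm_neg, eLpNorm_one_eq_lintegral_enorm,
        ← ofReal_integral_norm_eq_lintegral_enorm (hZint n)]
      rw [ENNReal.coe_nnreal_eq, Real.coe_toNNReal']
      refine ENNReal.ofReal_le_ofReal ?_
      refine le_trans ?_ (le_max_left C 0)
      simpa [Real.norm_eq_abs] using hZL1 n
    filter_upwards [hsub.exists_ae_tendsto_of_bdd hbdd] with ω ⟨c, hc⟩
    exact ⟨-c, by simpa using hc.neg⟩
  -- a.e. convergence of A
  have hAconv : ∀ᵐ ω ∂P, ∃ c, Tendsto (fun k => A k ω) atTop (nhds c) := by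
    filter_upwards [hsumas] with ω hω
    have hs : Summable fun j => incr j ω := by
      have h1 : Summable fun j => α j * θ j ω * K₄ := hω.mul_right K₄
      have h2 : Summable fun j => α j ^ 2 * K₅ := hα2.mul_right K₅
      simpa [hincr_def] using h1.add h2
    exact ⟨∑' j, incr j ω, hs.hasSum.tendsto_sum_nat⟩
  -- combine and identify the limit
  have hnotsum : ¬ Summable α := fun hs =>
    not_tendsto_nhds_of_tendsto_atTop hα1 _ hs.hasSum.tendsto_sum_nat
  filter_upwards [hZconv, hAconv, hsumas] with ω ⟨z, hz⟩ ⟨a, ha⟩ hsum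
  have hθconv : Tendsto (fun k => θ k ω) atTop (nhds (z + a)) := by
    have : (fun k => θ k ω) = fun k => Z k ω + A k ω := by
      funext k; simp [hZ_def]
    rw [this]
    exact hz.add ha
  set L : ℝ := z + a with hL
  have hLnn : 0 ≤ L := ge_of_tendsto' hθconv fun k => hθnn k ω
  have hLzero : L = 0 := by
    by_contra hne
    have hLpos : 0 < L := lt_of_le_of_ne hLnn (Ne.symm hne)
    -- eventually θ k ω ≥ L/2
    have hev : ∀ᶠ k in atTop, L / 2 ≤ θ k ω := by
      filter_upwards [hθconv.eventually_const_lt (show L / 2 < L by linarith)] with k hk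
      exact hk.le
    obtain ⟨N, hN⟩ := eventually_atTop.mp hev
    have hsummα : Summable α := by
      rw [← summable_nat_add_iff N]
      refine Summable.of_nonneg_of_le (fun n => hα _) (fun n => ?_)
        (((summable_nat_add_iff N).mpr hsum).mul_left (2 / L))
      have hθ' : L / 2 ≤ θ (n + N) ω := hN _ (Nat.le_add_left N n)
      have h1 : α (n + N) * (L / 2) ≤ α (n + N) * θ (n + N) ω :=
        mul_le_mul_of_nonneg_left hθ' (hα _)
      have hL2 : (0:ℝ) < L / 2 := by linarith
      calc α (n + N) = (2 / L) * (α (n + N) * (L / 2)) := by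
            field_simp
        _ ≤ (2 / L) * (α (n + N) * θ (n + N) ω) :=
            mul_le_mul_of_nonneg_left h1 (by positivity)
    exact hnotsum hsummα
  rw [hLzero] at hθconv
  exact hθconv
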